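/- For all sufficiently small ε₀ > 0 there exists an integer n₀ such that the following holds, where ε₁ = 8√ε₀. Let n > n₀ be even and let H be a 3-graph on n vertices with δ₁(H) ≥ C(n−1,2) − C(⌊3n/4⌋,2) + c, where c = 2 if n is divisible by 4 and c = 1 otherwise. Let B ⊆ V(H) with |B| = ⌊3n/4⌋ satisfy e(B) < ε₀·C(|B|,3), and let A' = {v ∈ V(H) : deg(v, B) ≥ (1 − ε₁)·C(|B|,2)} and B' = {v ∈ V(H) : deg(v, B) ≤ ε₁·C(|B|,2)}. Then for every pair of vertices u, v ∈ B' and every vertex set S ⊆ V(H) with |S| ≤ n/8, there exist a vertex a ∈ A' \ S and vertices b₁, b₂ ∈ B' \ S such that u, b₁, a, b₂, v are five distinct vertices and {u, b₁, a} ∈ E(H) and {a, b₂, v} ∈ E(H). -/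

import Mathlib

/-- The degree of a vertex in a 3-graph: the number of edges containing it. -/
def hdeg {α : Type*} [DecidableEq α] (H : Finset (Finset α)) (v : α) : ℕ :=
  (H.filter (fun e => v ∈ e)).card

/-- The number of edges of `H` contained in the vertex set `B`. -/
def eIn {α : Type*} [DecidableEq α] (H : Finset (Finset α)) (B : Finset α) : ℕ :=
  (H.filter (fun e => e ⊆ B)).card

/-- `deg(v, S)`: the number of edges of `H` consisting of `v` together with two vertices
of `S \ {v}`. -/
def degv {α : Type*} [DecidableEq α] (H : Finset (Finset α)) (v : α) (S : Finset α) : ℕ :=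
  (H.filter (fun e => v ∈ e ∧ e.erase v ⊆ S)).card

open Finset

set_option linter.unusedSectionVars false

section AuxLemmas

variable {α : Type*} [DecidableEq α]

lemma swap_sum (B : Finset α) (H : Finset (Finset α)) (p : α → Finset α → Prop)
    [∀ w e, Decidable (p w e)] :
    ∑ w ∈ B, (H.filter fun e => p w e).card = ∑ e ∈ H, (B.filter fun w => p w e).card := by
  simp only [Finset.card_filter]
  exact Finset.sum_comm

lemma degv_le_choose (H : Finset (Finset α)) (h3 : ∀ e ∈ H, e.card = 3) (x : α) (S : Finset α) :
    degv H x S ≤ S.card.choose 2 := by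
  rw [degv, ← Finset.card_powersetCard 2 S]
  apply Finset.card_le_card_of_injOn (fun e => e.erase x)
  · intro e he
    simp only [Finset.mem_coe, Finset.mem_filter] at he
    simp only [Finset.mem_coe, Finset.mem_powersetCard]
    exact ⟨he.2.2, by rw [Finset.card_erase_of_mem he.2.1, h3 e he.1]⟩
  · intro e he e' he' h
    simp only [coe_filter, Set.mem_setOf_eq] at he he'
    simp only at h
    rw [← Finset.insert_erase he.2.1, ← Finset.insert_erase he'.2.1, h]

lemma sum_degv_eq (H : Finset (Finset α)) (h3 : ∀ e ∈ H, e.card = 3) (B : Finset α) :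
    ∑ w ∈ B, degv H w B = 3 * eIn H B := by
  simp only [degv]
  rw [swap_sum]
  rw [eIn, Finset.card_filter, Finset.mul_sum]
  apply Finset.sum_congr rfl
  intro e he
  by_cases h : e ⊆ B
  · rw [if_pos h]
    have : B.filter (fun w => w ∈ e ∧ e.erase w ⊆ B) = B.filter (fun w => w ∈ e) := by
      apply Finset.filter_congr
      intro w _
      simp only [and_iff_left_iff_imp]
      intro hw
      exact (Finset.erase_subset _ _).trans h
    rw [this, Finset.filter_mem_eq_inter, Finset.inter_eq_right.mpr h, h3 e he, mul_one]
  · rw [if_neg h]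
    rw [Finset.filter_false_of_mem, Finset.card_empty, mul_zero]
    intro w hw hc
    exact h (by
      have := Finset.insert_erase hc.1
      rw [← this]
      exact Finset.insert_subset hw hc.2)

set_option linter.unusedSectionVars false

lemma hdeg_split [Fintype α] (H : Finset (Finset α)) (h3 : ∀ e ∈ H, e.card = 3) (x : α)
    (B : Finset α) :
    hdeg H x = degv H x B
      + (H.filter fun e => x ∈ e ∧ (e.erase x ∩ B).card = 1).card
      + degv H x (Finset.univ \ B) := by
  classical
  rw [hdeg, degv, degv]
  have h1 := Finset.card_filter_add_card_filter_not
    (s := H.filter (fun e => x ∈ e)) (p := fun e => e.erase x ⊆ B)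
  rw [Finset.filter_filter, Finset.filter_filter] at h1
  have h2 := Finset.card_filter_add_card_filter_not
    (s := H.filter (fun e => x ∈ e ∧ ¬ e.erase x ⊆ B)) (p := fun e => (e.erase x ∩ B).card = 1)
  rw [Finset.filter_filter, Finset.filter_filter] at h2
  have sub_iff : ∀ e ∈ H, x ∈ e → (e.erase x ⊆ B ↔ (e.erase x ∩ B).card = 2) := by
    intro e he hx
    have hc : (e.erase x).card = 2 := by rw [Finset.card_erase_of_mem hx, h3 e he]
    constructor
    · intro h; rw [Finset.inter_eq_left.mpr h, hc]
    · intro h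
      have := Finset.eq_of_subset_of_card_le (Finset.inter_subset_left (s₂ := B) (s₁ := e.erase x))
        (by rw [h, hc])
      rw [← Finset.inter_eq_left, this]
  have ea : (H.filter fun e => (x ∈ e ∧ ¬ e.erase x ⊆ B) ∧ (e.erase x ∩ B).card = 1)
      = H.filter fun e => x ∈ e ∧ (e.erase x ∩ B).card = 1 := by
    apply Finset.filter_congr
    intro e he
    constructor
    · rintro ⟨⟨hx, _⟩, ht⟩; exact ⟨hx, ht⟩
    · rintro ⟨hx, ht⟩
      refine ⟨⟨hx, fun hs => ?_⟩, ht⟩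
      rw [(sub_iff e he hx).mp hs] at ht; omega
  have eb : (H.filter fun e => (x ∈ e ∧ ¬ e.erase x ⊆ B) ∧ ¬ (e.erase x ∩ B).card = 1)
      = H.filter fun e => x ∈ e ∧ e.erase x ⊆ Finset.univ \ B := by
    apply Finset.filter_congr
    intro e he
    have hc' : ∀ hx : x ∈ e, (e.erase x).card = 2 := by
      intro hx; rw [Finset.card_erase_of_mem hx, h3 e he]
    constructor
    · rintro ⟨⟨hx, hs⟩, ht⟩
      refine ⟨hx, fun y hy => ?_⟩
      have hle : (e.erase x ∩ B).card ≤ 2 := by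
        rw [← hc' hx]; exact Finset.card_le_card Finset.inter_subset_left
      have hne2 : (e.erase x ∩ B).card ≠ 2 := fun h => hs ((sub_iff e he hx).mpr h)
      have h0 : (e.erase x ∩ B).card = 0 := by omega
      rw [Finset.card_eq_zero] at h0
      simp only [Finset.mem_sdiff, Finset.mem_univ, true_and]
      intro hyB
      exact Finset.notMem_empty y (h0 ▸ Finset.mem_inter.mpr ⟨hy, hyB⟩)
    · rintro ⟨hx, hs⟩
      have h0 : e.erase x ∩ B = ∅ := by
        ext y
        simp only [Finset.mem_inter, Finset.notMem_empty, iff_false, not_and]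
        intro hy hyB
        have := hs hy
        simp only [Finset.mem_sdiff] at this
        exact this.2 hyB
      refine ⟨⟨hx, fun hsub => ?_⟩, by rw [h0]; simp⟩
      have := (sub_iff e he hx).mp hsub
      rw [h0] at this; simp at this
  rw [ea, eb] at h2
  omega

lemma erase_inter_eq {e B : Finset α} {w : α} : e.erase w ∩ B = (e ∩ B).erase w := by
  ext y; simp only [Finset.mem_inter, Finset.mem_erase]; tauto

lemma per_edge [Fintype α] {e B : Finset α} (he3 : e.card = 3) :
    (B.filter fun w => w ∈ e ∧ (e.erase w ∩ B).card = 1).card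
      = 2 * ((Finset.univ \ B).filter fun a => a ∈ e ∧ e.erase a ⊆ B).card := by
  classical
  have hsum : (e ∩ B).card + (e \ B).card = 3 := by
    rw [Finset.card_inter_add_card_sdiff, he3]
  by_cases hk : (e ∩ B).card = 2
  · have hdb : (e \ B).card = 1 := by omega
    obtain ⟨a0, ha0⟩ := Finset.card_eq_one.mp hdb
    have hL : B.filter (fun w => w ∈ e ∧ (e.erase w ∩ B).card = 1)
        = B.filter (fun w => w ∈ e) := by
      apply Finset.filter_congr
      intro w hw
      simp only [and_iff_left_iff_imp]
      intro hwe
      rw [erase_inter_eq, Finset.card_erase_of_mem (Finset.mem_inter.mpr ⟨hwe, hw⟩), hk]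
    have hR : (Finset.univ \ B).filter (fun a => a ∈ e ∧ e.erase a ⊆ B) = e \ B := by
      ext a
      simp only [Finset.mem_filter, Finset.mem_sdiff, Finset.mem_univ, true_and]
      constructor
      · rintro ⟨haB, hae, _⟩; exact ⟨hae, haB⟩
      · rintro ⟨hae, haB⟩
        refine ⟨haB, hae, fun y hy => ?_⟩
        simp only [Finset.mem_erase] at hy
        by_contra hyB
        have : y ∈ e \ B := Finset.mem_sdiff.mpr ⟨hy.2, hyB⟩
        have : y = a0 := by rw [ha0] at this; exact Finset.mem_singleton.mp this
        have ha' : a = a0 := by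
          have : a ∈ e \ B := Finset.mem_sdiff.mpr ⟨hae, haB⟩
          rw [ha0] at this; exact Finset.mem_singleton.mp this
        exact hy.1 (by rw [this, ha'])
    rw [hL, hR, Finset.filter_mem_eq_inter, hdb, mul_one, Finset.inter_comm]
    exact hk
  · have hL : B.filter (fun w => w ∈ e ∧ (e.erase w ∩ B).card = 1) = ∅ := by
      apply Finset.filter_false_of_mem
      intro w hw hc
      rw [erase_inter_eq, Finset.card_erase_of_mem (Finset.mem_inter.mpr ⟨hc.1, hw⟩)] at hc
      have hpos : 0 < (e ∩ B).card := Finset.card_pos.mpr ⟨w, Finset.mem_inter.mpr ⟨hc.1, hw⟩⟩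
      omega
    have hR : (Finset.univ \ B).filter (fun a => a ∈ e ∧ e.erase a ⊆ B) = ∅ := by
      apply Finset.filter_false_of_mem
      intro a ha hc
      simp only [Finset.mem_sdiff, Finset.mem_univ, true_and] at ha
      have : e ∩ B = e.erase a := by
        apply Finset.Subset.antisymm
        · intro y hy
          simp only [Finset.mem_inter] at hy
          exact Finset.mem_erase.mpr ⟨fun h => ha (h ▸ hy.2), hy.1⟩
        · intro y hy
          simp only [Finset.mem_erase] at hy
          exact Finset.mem_inter.mpr ⟨hy.2, hc.2 (Finset.mem_erase.mpr hy)⟩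
      rw [this, Finset.card_erase_of_mem hc.1, he3] at hk
      omega
    rw [hL, hR]; simp

lemma sum_d1_eq [Fintype α] (H : Finset (Finset α)) (h3 : ∀ e ∈ H, e.card = 3) (B : Finset α) :
    ∑ w ∈ B, (H.filter fun e => w ∈ e ∧ (e.erase w ∩ B).card = 1).card
      = 2 * ∑ a ∈ Finset.univ \ B, degv H a B := by
  classical
  simp only [degv]
  rw [swap_sum, swap_sum, Finset.mul_sum]
  exact Finset.sum_congr rfl fun e he => per_edge (h3 e he)

def pick {β : Type*} [LinearOrder β] (d : β) (s : Finset β) : β :=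
  if h : s.Nonempty then s.min' h else d

lemma pick_singleton {β : Type*} [LinearOrder β] (d a : β) : pick d ({a} : Finset β) = a := by
  rw [pick, dif_pos ⟨a, Finset.mem_singleton_self a⟩, Finset.min'_singleton]

lemma d1_le_rows [Fintype α] [LinearOrder α] (H : Finset (Finset α))
    (h3 : ∀ e ∈ H, e.card = 3) (B : Finset α) (u : α) :
    (H.filter fun e => u ∈ e ∧ (e.erase u ∩ B).card = 1).card
      ≤ ∑ a ∈ (Finset.univ \ B).erase u,
          ((B.erase u).filter fun b => ({u, a, b} : Finset α) ∈ H).card := by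
  classical
  rw [← Finset.card_sigma]
  apply Finset.card_le_card_of_injOn
    (fun e => ⟨pick u (e.erase u \ B), pick u (e.erase u ∩ B)⟩)
  · intro e hef
    simp only [Finset.mem_coe, Finset.mem_filter] at hef
    obtain ⟨he, hu, h1⟩ := hef
    have hc2 : (e.erase u).card = 2 := by rw [Finset.card_erase_of_mem hu, h3 e he]
    have hdc : (e.erase u \ B).card = 1 := by
      have := Finset.card_inter_add_card_sdiff (e.erase u) B
      omega
    obtain ⟨a0, ha0⟩ := Finset.card_eq_one.mp hdc
    obtain ⟨b0, hb0⟩ := Finset.card_eq_one.mp h1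
    have hrec : e = {u, a0, b0} := by
      have h4 : e.erase u = {a0, b0} := by
        have := Finset.sdiff_union_inter (e.erase u) B
        rw [ha0, hb0] at this
        rw [← this]; rfl
      rw [← Finset.insert_erase hu, h4]
    have ha0m : a0 ∈ e.erase u \ B := by rw [ha0]; exact Finset.mem_singleton_self a0
    have hb0m : b0 ∈ e.erase u ∩ B := by rw [hb0]; exact Finset.mem_singleton_self b0
    simp only [Finset.mem_sdiff, Finset.mem_erase, Finset.mem_inter] at ha0m hb0m
    simp only [ha0, hb0, pick_singleton, Finset.mem_coe, Finset.mem_sigma, Finset.mem_erase,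
      Finset.mem_sdiff, Finset.mem_univ, true_and, Finset.mem_filter]
    exact ⟨⟨ha0m.1.1, ha0m.2⟩, ⟨hb0m.1.1, hb0m.2⟩, by rw [← hrec]; exact he⟩
  · intro e hef e' hef' hfe
    simp only [Finset.coe_filter, Set.mem_setOf_eq] at hef hef'
    obtain ⟨he, hu, h1⟩ := hef
    obtain ⟨he', hu', h1'⟩ := hef'
    have hc2 : (e.erase u).card = 2 := by rw [Finset.card_erase_of_mem hu, h3 e he]
    have hc2' : (e'.erase u).card = 2 := by rw [Finset.card_erase_of_mem hu', h3 e' he']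
    have hdc : (e.erase u \ B).card = 1 := by
      have := Finset.card_inter_add_card_sdiff (e.erase u) B; omega
    have hdc' : (e'.erase u \ B).card = 1 := by
      have := Finset.card_inter_add_card_sdiff (e'.erase u) B; omega
    obtain ⟨a0, ha0⟩ := Finset.card_eq_one.mp hdc
    obtain ⟨b0, hb0⟩ := Finset.card_eq_one.mp h1
    obtain ⟨a0', ha0'⟩ := Finset.card_eq_one.mp hdc'
    obtain ⟨b0', hb0'⟩ := Finset.card_eq_one.mp h1'
    have hrec : e = insert u (insert a0 {b0}) := by
      have h4 : e.erase u = insert a0 {b0} := by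
        have := Finset.sdiff_union_inter (e.erase u) B
        rw [ha0, hb0] at this
        rw [← this]; rfl
      rw [← Finset.insert_erase hu, h4]
    have hrec' : e' = insert u (insert a0' {b0'}) := by
      have h4 : e'.erase u = insert a0' {b0'} := by
        have := Finset.sdiff_union_inter (e'.erase u) B
        rw [ha0', hb0'] at this
        rw [← this]; rfl
      rw [← Finset.insert_erase hu', h4]
    simp only [ha0, hb0, ha0', hb0', pick_singleton, Sigma.mk.inj_iff, heq_eq_eq] at hfe
    rw [hrec, hrec', hfe.1, hfe.2]

end AuxLemmas

set_option maxHeartbeats 1000000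

/-- Connecting claim: with `ε₁ = 8√ε₀`, `B` of size `⌊3n/4⌋` and `e(B) < ε₀ C(|B|,3)`,
`A' = {v : deg(v,B) ≥ (1-ε₁) C(|B|,2)}`, `B' = {v : deg(v,B) ≤ ε₁ C(|B|,2)}`:
any two vertices `u ≠ v` of `B'` can be joined by a loose path of length two through
a vertex `a ∈ A'` and vertices `b₁, b₂ ∈ B'`, all avoiding any given set `S` with
`|S| ≤ n/8`. -/
theorem stmt_19 :
    ∃ ε₀' : ℝ, 0 < ε₀' ∧ ∀ ε₀ : ℝ, 0 < ε₀ → ε₀ ≤ ε₀' →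
    ∃ n₀ : ℕ, ∀ n : ℕ, n > n₀ → Even n →
    ∀ H : Finset (Finset (Fin n)), (∀ e ∈ H, e.card = 3) →
    (∀ v : Fin n,
      (n - 1).choose 2 - (3 * n / 4).choose 2 + (if 4 ∣ n then 2 else 1) ≤ hdeg H v) →
    ∀ B : Finset (Fin n), B.card = 3 * n / 4 →
    (eIn H B : ℝ) < ε₀ * (B.card.choose 3 : ℝ) →
    let ε₁ : ℝ := 8 * Real.sqrt ε₀
    let inA' : Fin n → Prop :=
      fun x => (1 - ε₁) * (B.card.choose 2 : ℝ) ≤ (degv H x B : ℝ)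
    let inB' : Fin n → Prop :=
      fun x => (degv H x B : ℝ) ≤ ε₁ * (B.card.choose 2 : ℝ)
    ∀ u v : Fin n, inB' u → inB' v → u ≠ v →
    ∀ S : Finset (Fin n), (S.card : ℝ) ≤ (n : ℝ) / 8 →
    ∃ a b₁ b₂ : Fin n,
      inA' a ∧ a ∉ S ∧ inB' b₁ ∧ b₁ ∉ S ∧ inB' b₂ ∧ b₂ ∉ S ∧
      ({u, b₁, a, b₂, v} : Finset (Fin n)).card = 5 ∧
      ({u, b₁, a} : Finset (Fin n)) ∈ H ∧ ({a, b₂, v} : Finset (Fin n)) ∈ H := by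
  classical
  refine ⟨1/40000, by norm_num, ?_⟩
  intro ε₀ hε₀pos hε₀le
  refine ⟨⌈(8:ℝ)/ε₀⌉₊ + 1000000, ?_⟩
  intro n hn hneven H h3 hdegH B hBcard heB
  intro ε₁ inA' inB'
  intro u v huB' hvB' huv S hS
  set s : ℝ := Real.sqrt ε₀ with hs_def
  have hs0 : 0 < s := Real.sqrt_pos.mpr hε₀pos
  have hssq : s^2 = ε₀ := Real.sq_sqrt hε₀pos.le
  have hs200 : s ≤ 1/200 := by
    have : s ≤ Real.sqrt (1/40000) := Real.sqrt_le_sqrt hε₀le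
    have h2 : Real.sqrt (1/40000) = 1/200 := by
      rw [show (1/40000 : ℝ) = (1/200)^2 by norm_num, Real.sqrt_sq (by norm_num)]
    linarith
  -- basic sizes
  set m : ℕ := 3 * n / 4 with hm_def
  have hnn0 : 1000000 ≤ n := le_trans (Nat.le_add_left _ _) hn.le
  have hnceil : ⌈(8:ℝ)/ε₀⌉₊ ≤ n := le_trans (Nat.le_add_right _ _) hn.le
  have hn8 : (8:ℝ)/ε₀ ≤ (n:ℝ) := by
    calc (8:ℝ)/ε₀ ≤ (⌈(8:ℝ)/ε₀⌉₊ : ℝ) := Nat.le_ceil _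
    _ ≤ (n:ℝ) := Nat.cast_le.mpr hnceil
  have hs2n : 8 ≤ s^2 * (n:ℝ) := by
    rw [hssq]
    rw [div_le_iff₀ hε₀pos] at hn8
    linarith
  have hNbig : (1000000 : ℝ) ≤ (n:ℝ) := by exact_mod_cast hnn0
  have hmn : 3 * n - 2 ≤ 4 * m ∧ 4 * m ≤ 3 * n := by
    obtain ⟨k, hk⟩ := hneven
    omega
  have hm2 : 2 ≤ m := by omega
  have hmlt : m ≤ n - 1 := by omega
  set N : ℝ := (n:ℝ) with hN_def
  set M : ℝ := (m:ℝ) with hM_def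
  have hMN1 : 3 * N - 2 ≤ 4 * M := by
    have := hmn.1
    have h2 : ((3 * n - 2 : ℕ) : ℝ) ≤ ((4 * m : ℕ) : ℝ) := by exact_mod_cast this
    push_cast [Nat.cast_sub (show 2 ≤ 3*n by omega)] at h2
    linarith
  have hMN2 : 4 * M ≤ 3 * N := by rw [hM_def, hN_def]; exact_mod_cast hmn.2
  have hM2R : (2:ℝ) ≤ M := by rw [hM_def]; exact_mod_cast hm2
  have hNpos : 0 < N := by linarith
  have hMpos : 0 < M := by linarith
  have hMN : M ≤ N := by linarith
  have hmlen : m ≤ n := by omega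
  -- choose-2 casts
  set C2 : ℝ := (m.choose 2 : ℝ) with hC2_def
  set C3 : ℝ := (m.choose 3 : ℝ) with hC3_def
  have hC2 : C2 = M * (M - 1) / 2 := by
    rw [hC2_def, Nat.cast_choose_two]
  have hC2pos : 0 < C2 := by rw [hC2]; nlinarith
  have hC3id : 3 * C3 = C2 * (M - 2) := by
    have h := Nat.choose_succ_right_eq m 2
    have h' : (m.choose 3 * 3 : ℕ) = m.choose 2 * (m - 2) := h
    have hcast : ((m.choose 3 * 3 : ℕ) : ℝ) = ((m.choose 2 * (m - 2) : ℕ) : ℝ) := by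
      exact_mod_cast h'
    push_cast [Nat.cast_sub hm2] at hcast
    rw [hC3_def, hC2_def]
    linarith
  have hC3nonneg : 0 ≤ C3 := by positivity
  -- min degree cast
  set c : ℕ := if 4 ∣ n then 2 else 1 with hc_def
  have hc1 : 1 ≤ c := by rw [hc_def]; split <;> norm_num
  set δ : ℕ := (n - 1).choose 2 - m.choose 2 + c with hδ_def
  have hchle : m.choose 2 ≤ (n-1).choose 2 := Nat.choose_le_choose 2 hmlt
  have hδR : ((N - 1) * (N - 2) / 2 - M * (M-1) / 2 + 1 : ℝ) ≤ (δ : ℝ) := by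
    have hcge : (1:ℝ) ≤ (c:ℝ) := by exact_mod_cast hc1
    have h1 : ((n - 1 : ℕ) : ℝ) = N - 1 := by
      rw [Nat.cast_sub (by omega : 1 ≤ n)]; norm_num; rfl
    have h2 : ((δ:ℕ):ℝ) = ((n-1).choose 2 : ℝ) - (m.choose 2:ℝ) + c := by
      rw [hδ_def]; push_cast [Nat.cast_sub hchle]; ring
    rw [h2, Nat.cast_choose_two, Nat.cast_choose_two, h1]
    have h3 : N - 1 - 1 = N - 2 := by ring
    rw [h3]
    linarith
  have hε₁ : ε₁ = 8 * s := rfl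
  have hBC2 : ((B.card).choose 2 : ℝ) = C2 := by rw [hBcard]
  have hBC3 : ((B.card).choose 3 : ℝ) = C3 := by rw [hBcard]
  -- Step A : Bbad is small
  set Bbad : Finset (Fin n) := B.filter (fun w => ¬ inB' w) with hBbad_def
  have hBbadcard : (Bbad.card : ℝ) ≤ s * M / 8 := by
    have hsum3 : ∑ w ∈ B, degv H w B = 3 * eIn H B := sum_degv_eq H h3 B
    have hstep : (Bbad.card : ℝ) * (8 * s * C2) ≤ ∑ w ∈ Bbad, (degv H w B : ℝ) := by
      have h := Finset.card_nsmul_le_sum Bbad (fun w => (degv H w B : ℝ)) (8*s*C2) ?_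
      · simpa [nsmul_eq_mul] using h
      · intro x hx
        rw [hBbad_def] at hx
        simp only [Finset.mem_filter] at hx
        have hx2 : ¬ ((degv H x B : ℝ) ≤ ε₁ * ((B.card).choose 2 : ℝ)) := hx.2
        rw [not_le, hε₁, hBC2] at hx2
        show 8*s*C2 ≤ (degv H x B : ℝ)
        linarith only [hx2]
    have hstep2 : ∑ w ∈ Bbad, (degv H w B : ℝ) ≤ ∑ w ∈ B, (degv H w B : ℝ) := by
      apply Finset.sum_le_sum_of_subset_of_nonneg (Finset.filter_subset _ _)
      intro i _ _
      positivity
    have hstep3 : ∑ w ∈ B, (degv H w B : ℝ) = 3 * (eIn H B : ℝ) := by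
      rw [← Nat.cast_sum, hsum3]; push_cast; ring
    have hfin : (Bbad.card : ℝ) * (8 * s * C2) ≤ 3 * ε₀ * C3 := by
      rw [hBC3] at heB
      linarith
    have h3e : 3 * ε₀ * C3 = s^2 * (C2 * (M - 2)) := by
      rw [hssq, ← hC3id]; ring
    rw [h3e] at hfin
    have hstep4 : s^2*(C2*(M-2)) ≤ (s*M/8) * (8*s*C2) := by
      nlinarith only [mul_nonneg (sq_nonneg s) hC2pos.le]
    exact le_of_mul_le_mul_right (hfin.trans hstep4) (by positivity)
  -- Step B : Abad is small
  have hnm_cast : ((n - m : ℕ) : ℝ) = N - M := by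
    rw [hN_def, hM_def]; exact Nat.cast_sub hmlen
  have hAdcard : (((Finset.univ \ B).card : ℕ) : ℝ) = N - M := by
    rw [Finset.card_univ_diff, Fintype.card_fin, hBcard, hnm_cast]
  set SA : ℕ := ∑ x ∈ Finset.univ \ B, degv H x B with hSA_def
  have hL2 : m * δ ≤ 3 * eIn H B + 2 * SA + m * ((n - m).choose 2) := by
    have h1 : m * δ ≤ ∑ w ∈ B, hdeg H w := by
      have h := Finset.card_nsmul_le_sum B (fun w => hdeg H w) δ (fun x _ => hdegH x)
      rwa [hBcard, smul_eq_mul] at h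
    have h2 : ∑ w ∈ B, hdeg H w = (∑ w ∈ B, degv H w B)
        + (∑ w ∈ B, (H.filter fun e => w ∈ e ∧ (e.erase w ∩ B).card = 1).card)
        + ∑ w ∈ B, degv H w (Finset.univ \ B) := by
      rw [← Finset.sum_add_distrib, ← Finset.sum_add_distrib]
      exact Finset.sum_congr rfl fun w _ => hdeg_split H h3 w B
    have h4 := sum_d1_eq H h3 B
    have h5 := sum_degv_eq H h3 B
    have h6 : ∑ w ∈ B, degv H w (Finset.univ \ B) ≤ m * ((n-m).choose 2) := by
      calc ∑ w ∈ B, degv H w (Finset.univ \ B) ≤ ∑ _w ∈ B, (n-m).choose 2 :=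
            Finset.sum_le_sum (fun w _ => by
              have hh := degv_le_choose H h3 w (Finset.univ \ B)
              rwa [Finset.card_univ_diff, Fintype.card_fin, hBcard] at hh)
        _ = m * ((n-m).choose 2) := by rw [Finset.sum_const, hBcard, smul_eq_mul]
    rw [← hSA_def] at h4
    omega
  have hL2R : M * (δ:ℝ) ≤ 3 * (eIn H B : ℝ) + 2 * (SA:ℝ) + M * ((N-M)*(N-M-1)/2) := by
    have hcast : ((m * δ : ℕ):ℝ) ≤ ((3 * eIn H B + 2 * SA + m * ((n - m).choose 2) : ℕ):ℝ) := by
      exact_mod_cast hL2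
    push_cast at hcast
    rw [Nat.cast_choose_two, hnm_cast] at hcast
    rw [hM_def]
    convert hcast using 2
  set Abad : Finset (Fin n) := (Finset.univ \ B).filter (fun x => ¬ inA' x) with hAbad_def
  have hdegvC2 : ∀ x : Fin n, (degv H x B : ℝ) ≤ C2 := by
    intro x
    have hh := degv_le_choose H h3 x B
    rw [hBcard] at hh
    rw [hC2_def]
    exact_mod_cast hh
  have hdefsum : (Abad.card:ℝ) * (8*s*C2) ≤ (N-M)*C2 - (SA:ℝ) := by
    have h1 : (Abad.card:ℝ) * (8*s*C2) ≤ ∑ x ∈ Abad, (C2 - (degv H x B:ℝ)) := by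
      have h := Finset.card_nsmul_le_sum Abad (fun x => C2 - (degv H x B:ℝ)) (8*s*C2) ?_
      · simpa [nsmul_eq_mul] using h
      · intro x hx
        rw [hAbad_def] at hx
        simp only [Finset.mem_filter] at hx
        have hx2 : ¬ ((1 - ε₁) * ((B.card).choose 2 : ℝ) ≤ (degv H x B : ℝ)) := hx.2
        rw [not_le, hε₁, hBC2] at hx2
        show 8*s*C2 ≤ C2 - (degv H x B : ℝ)
        linarith only [hx2]
    have h2 : ∑ x ∈ Abad, (C2 - (degv H x B:ℝ)) ≤ ∑ x ∈ Finset.univ \ B, (C2 - (degv H x B:ℝ)) := by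
      apply Finset.sum_le_sum_of_subset_of_nonneg (Finset.filter_subset _ _)
      intro i _ _
      have := hdegvC2 i
      linarith
    have h3' : ∑ x ∈ Finset.univ \ B, (C2 - (degv H x B:ℝ)) = (N-M)*C2 - (SA:ℝ) := by
      rw [Finset.sum_sub_distrib, Finset.sum_const, nsmul_eq_mul, hAdcard]
      congr 1
      rw [hSA_def]
      push_cast
      ring
    linarith only [h1, h2, h3']
  have heB2 : (eIn H B : ℝ) < s^2 * C3 := by
    rw [hssq, ← hBC3]; exact heB
  have hs2le1 : s^2 ≤ 1 := by
    have h := mul_le_mul_of_nonneg_left hs200 hs0.le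
    linarith only [h, hs200, hs0.le]
  have hs2M : 5 ≤ s^2 * M := by
    have hp := mul_le_mul_of_nonneg_left hMN1 (sq_nonneg s)
    linarith only [hp, hs2n, hs2le1]
  have hAbadcard : (Abad.card : ℝ) ≤ s * N / 5 := by
    have hSAlow : M * ((N-1)*(N-2)/2 - M*(M-1)/2 + 1) - 3*s^2*C3 - M*((N-M)*(N-M-1)/2)
        ≤ 2 * (SA:ℝ) := by
      have hMδ : M * ((N-1)*(N-2)/2 - M*(M-1)/2 + 1) ≤ M * (δ:ℝ) :=
        mul_le_mul_of_nonneg_left hδR (le_of_lt hMpos)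
      linarith only [hL2R, hMδ, heB2]
    have hkey : (Abad.card:ℝ) * (8*s*C2) ≤ M*(M-2)/2 + (3/2)*s^2*C3 := by
      have hring : (N-M)*(M * (M-1)/2)
          - (M * ((N-1)*(N-2)/2 - M*(M-1)/2 + 1) - M*((N-M)*(N-M-1)/2))/2 = M*(M-2)/2 := by
        ring
      rw [hC2] at hdefsum ⊢
      linarith only [hring, hdefsum, hSAlow]
    have hC3' : (3/2)*s^2*C3 = s^2*C2*(M-2)/2 := by
      have : (3/2)*s^2*C3 = (s^2/2) * (3*C3) := by ring
      rw [this, hC3id]; ring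
    rw [hC3'] at hkey
    have hge : M*(M-2)/2 + s^2*C2*(M-2)/2 ≤ (s*N/5) * (8*s*C2) := by
      rw [hC2]
      have hM1 : (0:ℝ) ≤ M - 1 := by linarith only [hM2R]
      have f1 : (0:ℝ) ≤ s^2*M*(M-1)*(3*N - 4*M) :=
        mul_nonneg (mul_nonneg (mul_nonneg (sq_nonneg s) hMpos.le) hM1)
          (by linarith only [hMN2])
      have f2 : (0:ℝ) ≤ (s^2*M - 5) * (M*(M-1)) :=
        mul_nonneg (by linarith only [hs2M]) (mul_nonneg hMpos.le hM1)
      have f3 : (0:ℝ) ≤ s^2*M*(M-1) :=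
        mul_nonneg (mul_nonneg (sq_nonneg s) hMpos.le) hM1
      have f4 : (0:ℝ) ≤ M*(43*M - 37) :=
        mul_nonneg hMpos.le (by linarith only [hM2R])
      nlinarith only [f1, f2, f3, f4]
    have hpos8 : 0 < 8*s*C2 := by positivity
    have := le_of_mul_le_mul_right (le_trans hkey hge) hpos8
    exact this
  -- Step C : for x with small B-degree, few vertices α outside B have small row
  have stepC : ∀ x : Fin n, (degv H x B : ℝ) ≤ ε₁ * ((B.card).choose 2 : ℝ) →
      (∀ α ∈ ((Finset.univ \ B).erase x).filter
          (fun α => ((((B.erase x).filter (fun b => ({x, α, b} : Finset (Fin n)) ∈ H)).card : ℝ) < M/2)),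
        True) →
      ((((Finset.univ \ B).erase x).filter
        (fun α => ((((B.erase x).filter (fun b => ({x, α, b} : Finset (Fin n)) ∈ H)).card : ℝ) < M/2))).card : ℝ)
        ≤ 4 + 6*s*N := by
    intro x hx _
    rw [hε₁, hBC2] at hx
    set row : Fin n → ℕ :=
      fun α => ((B.erase x).filter (fun b => ({x, α, b} : Finset (Fin n)) ∈ H)).card with hrow_def
    set badx : Finset (Fin n) :=
      ((Finset.univ \ B).erase x).filter (fun α => ((row α : ℝ) < M/2)) with hbadx_def
    have hsplit := hdeg_split H h3 x B
    have hd0 : degv H x (Finset.univ \ B) ≤ (n-m).choose 2 := by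
      have hh := degv_le_choose H h3 x (Finset.univ \ B)
      rwa [Finset.card_univ_diff, Fintype.card_fin, hBcard] at hh
    have hdd : δ ≤ hdeg H x := hdegH x
    have hd1 : (δ:ℝ) - 8*s*C2 - (N-M)*(N-M-1)/2
        ≤ ((H.filter fun e => x ∈ e ∧ (e.erase x ∩ B).card = 1).card : ℝ) := by
      have h1 : (δ:ℝ) ≤ (hdeg H x : ℝ) := by exact_mod_cast hdd
      have h2 : (degv H x (Finset.univ \ B) : ℝ) ≤ (N-M)*(N-M-1)/2 := by
        rw [← hnm_cast, ← Nat.cast_choose_two]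
        exact_mod_cast hd0
      have h3' : (hdeg H x : ℝ) = (degv H x B : ℝ)
          + ((H.filter fun e => x ∈ e ∧ (e.erase x ∩ B).card = 1).card : ℝ)
          + (degv H x (Finset.univ \ B) : ℝ) := by exact_mod_cast hsplit
      linarith
    have hrows := d1_le_rows H h3 B x
    have hrowsR : ((H.filter fun e => x ∈ e ∧ (e.erase x ∩ B).card = 1).card : ℝ)
        ≤ ∑ α ∈ (Finset.univ \ B).erase x, (row α : ℝ) := by
      rw [← Nat.cast_sum]
      exact_mod_cast hrows
    have hrowle : ∀ α : Fin n, (row α : ℝ) ≤ M := by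
      intro α
      rw [hM_def]
      have : row α ≤ m := by
        rw [hrow_def]
        calc ((B.erase x).filter (fun b => ({x, α, b} : Finset (Fin n)) ∈ H)).card
            ≤ (B.erase x).card := Finset.card_le_card (Finset.filter_subset _ _)
          _ ≤ B.card := Finset.card_erase_le
          _ = m := hBcard
      exact_mod_cast this
    have hcarderase : (((Finset.univ \ B).erase x).card : ℝ) ≤ N - M := by
      rw [← hAdcard]
      exact_mod_cast Finset.card_le_card (Finset.erase_subset _ _)
    have hsumtot : ∑ α ∈ (Finset.univ \ B).erase x, (M - (row α : ℝ)) ≤ N + 8*s*C2 := by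
      rw [Finset.sum_sub_distrib, Finset.sum_const, nsmul_eq_mul]
      have hA1 : (((Finset.univ \ B).erase x).card : ℝ) * M ≤ (N-M)*M :=
        mul_le_mul_of_nonneg_right hcarderase hMpos.le
      have hring : (N-M)*M - ((N-1)*(N-2)/2 - M*(M-1)/2 + 1) + (N-M)*(N-M-1)/2 = N - 2 := by
        ring
      linarith only [hd1, hrowsR, hδR, hA1, hring]
    have hbadsum : (badx.card : ℝ) * (M/2) ≤ ∑ α ∈ (Finset.univ \ B).erase x, (M - (row α : ℝ)) := by
      have h1 : (badx.card : ℝ) * (M/2) ≤ ∑ α ∈ badx, (M - (row α : ℝ)) := by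
        have h := Finset.card_nsmul_le_sum badx (fun α => M - (row α : ℝ)) (M/2) ?_
        · simpa [nsmul_eq_mul] using h
        · intro α hα
          rw [hbadx_def] at hα
          simp only [Finset.mem_filter] at hα
          show M/2 ≤ M - (row α : ℝ)
          linarith only [hα.2]
      have h2 : ∑ α ∈ badx, (M - (row α : ℝ)) ≤ ∑ α ∈ (Finset.univ \ B).erase x, (M - (row α : ℝ)) := by
        apply Finset.sum_le_sum_of_subset_of_nonneg (Finset.filter_subset _ _)
        intro i _ _
        linarith only [hrowle i]
      linarith only [h1, h2]
    -- conclude badx.card ≤ 4 + 6 s N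
    have h2MN : N ≤ 2*M := by linarith
    have hge : N + 8*s*C2 ≤ (4 + 6*s*N) * (M/2) := by
      rw [hC2]
      have g1 : (0:ℝ) ≤ s*M*(3*N - 4*M) :=
        mul_nonneg (mul_nonneg hs0.le hMpos.le) (by linarith only [hMN2])
      have g2 : (0:ℝ) ≤ s*M := mul_nonneg hs0.le hMpos.le
      nlinarith only [g1, g2, h2MN]
    have hMhalf : (0:ℝ) < M/2 := by linarith only [hMpos]
    exact le_of_mul_le_mul_right
      (by linarith only [hbadsum, hsumtot, hge] :
        (badx.card : ℝ) * (M/2) ≤ (4 + 6*s*N) * (M/2)) hMhalf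
  -- bad sets for u and v
  set badu : Finset (Fin n) := ((Finset.univ \ B).erase u).filter
    (fun α => ((((B.erase u).filter (fun b => ({u, α, b} : Finset (Fin n)) ∈ H)).card : ℝ) < M/2))
    with hbadu_def
  set badv : Finset (Fin n) := ((Finset.univ \ B).erase v).filter
    (fun α => ((((B.erase v).filter (fun b => ({v, α, b} : Finset (Fin n)) ∈ H)).card : ℝ) < M/2))
    with hbadv_def
  have hbaducard : (badu.card : ℝ) ≤ 4 + 6*s*N := stepC u huB' (fun _ _ => trivial)
  have hbadvcard : (badv.card : ℝ) ≤ 4 + 6*s*N := stepC v hvB' (fun _ _ => trivial)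
  -- helpers for cardinality chains
  have hsd : ∀ (X t : Finset (Fin n)), (X.card:ℝ) - (t.card:ℝ) ≤ ((X \ t).card : ℝ) := by
    intro X t
    have h := Finset.card_le_card_sdiff_add_card (s := X) (t := t)
    have h' : (X.card:ℝ) ≤ ((X \ t).card : ℝ) + t.card := by exact_mod_cast h
    linarith
  have her : ∀ (X : Finset (Fin n)) (x : Fin n), (X.card:ℝ) - 1 ≤ ((X.erase x).card : ℝ) := by
    intro X x
    have h : X.card ≤ (X.erase x).card + 1 := by
      have := Finset.pred_card_le_card_erase (s := X) (a := x); omega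
    have h' : (X.card:ℝ) ≤ ((X.erase x).card : ℝ) + 1 := by exact_mod_cast h
    linarith
  have hsN : s*N ≤ N/200 := by
    have h := mul_le_mul_of_nonneg_right hs200 hNpos.le
    linarith only [h]
  -- candidate set for the middle vertex a
  set Acand : Finset (Fin n) :=
    (((((Finset.univ \ B).erase u).erase v \ S) \ Abad) \ badu) \ badv with hAcand_def
  have hAcandpos : (0:ℝ) < (Acand.card : ℝ) := by
    have h0 : (N:ℝ) - M ≥ N/4 := by linarith only [hMN2]
    have h1 := her (Finset.univ \ B) u
    have h2 := her ((Finset.univ \ B).erase u) v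
    have h3' := hsd (((Finset.univ \ B).erase u).erase v) S
    have h4 := hsd ((((Finset.univ \ B).erase u).erase v) \ S) Abad
    have h5 := hsd (((((Finset.univ \ B).erase u).erase v) \ S) \ Abad) badu
    have h6 := hsd ((((((Finset.univ \ B).erase u).erase v) \ S) \ Abad) \ badu) badv
    rw [hAdcard] at h1
    rw [hAcand_def]
    linarith only [h0, h1, h2, h3', h4, h5, h6, hS, hAbadcard, hbaducard, hbadvcard, hsN, hNbig]
  obtain ⟨a, ha⟩ := Finset.card_pos.mp (by exact_mod_cast hAcandpos)
  rw [hAcand_def] at ha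
  simp only [Finset.mem_sdiff, Finset.mem_erase, Finset.mem_univ, and_true, true_and] at ha
  obtain ⟨⟨⟨⟨⟨hav, hau, haB⟩, haS⟩, haAbad⟩, habadu⟩, habadv⟩ := ha
  have haA' : inA' a := by
    by_contra hcon
    exact haAbad (by
      rw [hAbad_def]
      exact Finset.mem_filter.mpr ⟨Finset.mem_sdiff.mpr ⟨Finset.mem_univ a, haB⟩, hcon⟩)
  have hrowu : (M:ℝ)/2 ≤ (((B.erase u).filter (fun b => ({u, a, b} : Finset (Fin n)) ∈ H)).card : ℝ) := by
    by_contra hcon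
    push_neg at hcon
    exact habadu (by
      rw [hbadu_def]
      exact Finset.mem_filter.mpr ⟨Finset.mem_erase.mpr ⟨hau, Finset.mem_sdiff.mpr ⟨Finset.mem_univ a, haB⟩⟩, hcon⟩)
  have hrowv : (M:ℝ)/2 ≤ (((B.erase v).filter (fun b => ({v, a, b} : Finset (Fin n)) ∈ H)).card : ℝ) := by
    by_contra hcon
    push_neg at hcon
    exact habadv (by
      rw [hbadv_def]
      exact Finset.mem_filter.mpr ⟨Finset.mem_erase.mpr ⟨hav, Finset.mem_sdiff.mpr ⟨Finset.mem_univ a, haB⟩⟩, hcon⟩)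
  have hBbadM : (Bbad.card : ℝ) ≤ N/4 := by
    have hsM' : s * M ≤ M := by
      have h := mul_le_mul_of_nonneg_right (hs200.trans (by norm_num : (1:ℝ)/200 ≤ 1)) hMpos.le
      linarith only [h]
    linarith only [hBbadcard, hMN2, hsM']
  -- choose b₁
  set T1 : Finset (Fin n) :=
    ((((B.erase u).filter (fun b => ({u, a, b} : Finset (Fin n)) ∈ H)) \ Bbad) \ S).erase v
    with hT1_def
  have hT1pos : (0:ℝ) < (T1.card : ℝ) := by
    have h1 := hsd ((B.erase u).filter (fun b => ({u, a, b} : Finset (Fin n)) ∈ H)) Bbad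
    have h2 := hsd (((B.erase u).filter (fun b => ({u, a, b} : Finset (Fin n)) ∈ H)) \ Bbad) S
    have h3' := her ((((B.erase u).filter (fun b => ({u, a, b} : Finset (Fin n)) ∈ H)) \ Bbad) \ S) v
    have hsM' : s * M ≤ M := by
      have h := mul_le_mul_of_nonneg_right (hs200.trans (by norm_num : (1:ℝ)/200 ≤ 1)) hMpos.le
      linarith only [h]
    have hsM : s * M / 8 ≤ N/8 := by linarith only [hsM', hMN]
    rw [hT1_def]
    linarith only [h1, h2, h3', hrowu, hBbadcard, hS, hsM, hMN1, hNbig]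
  obtain ⟨b₁, hb1⟩ := Finset.card_pos.mp (by exact_mod_cast hT1pos)
  rw [hT1_def] at hb1
  simp only [Finset.mem_erase, Finset.mem_sdiff, Finset.mem_filter] at hb1
  obtain ⟨hb1v, ⟨⟨⟨hb1Beu, hb1edge⟩, hb1Bbad⟩, hb1S⟩⟩ := hb1
  obtain ⟨hb1u, hb1B⟩ := hb1Beu
  have hb1B' : inB' b₁ := by
    by_contra hcon
    exact hb1Bbad (by rw [hBbad_def]; exact Finset.mem_filter.mpr ⟨hb1B, hcon⟩)
  -- choose b₂
  set T2 : Finset (Fin n) :=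
    (((((B.erase v).filter (fun b => ({v, a, b} : Finset (Fin n)) ∈ H)) \ Bbad) \ S).erase u).erase b₁
    with hT2_def
  have hT2pos : (0:ℝ) < (T2.card : ℝ) := by
    have h1 := hsd ((B.erase v).filter (fun b => ({v, a, b} : Finset (Fin n)) ∈ H)) Bbad
    have h2 := hsd (((B.erase v).filter (fun b => ({v, a, b} : Finset (Fin n)) ∈ H)) \ Bbad) S
    have h3' := her ((((B.erase v).filter (fun b => ({v, a, b} : Finset (Fin n)) ∈ H)) \ Bbad) \ S) u
    have h4 := her (((((B.erase v).filter (fun b => ({v, a, b} : Finset (Fin n)) ∈ H)) \ Bbad) \ S).erase u) b₁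
    have hsM' : s * M ≤ M := by
      have h := mul_le_mul_of_nonneg_right (hs200.trans (by norm_num : (1:ℝ)/200 ≤ 1)) hMpos.le
      linarith only [h]
    have hsM : s * M / 8 ≤ N/8 := by linarith only [hsM', hMN]
    rw [hT2_def]
    linarith only [h1, h2, h3', h4, hrowv, hBbadcard, hS, hsM, hMN1, hNbig]
  obtain ⟨b₂, hb2⟩ := Finset.card_pos.mp (by exact_mod_cast hT2pos)
  rw [hT2_def] at hb2
  simp only [Finset.mem_erase, Finset.mem_sdiff, Finset.mem_filter] at hb2
  obtain ⟨hb2b1, hb2u, ⟨⟨⟨hb2Bev, hb2edge⟩, hb2Bbad⟩, hb2S⟩⟩ := hb2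
  obtain ⟨hb2v, hb2B⟩ := hb2Bev
  have hb2B' : inB' b₂ := by
    by_contra hcon
    exact hb2Bbad (by rw [hBbad_def]; exact Finset.mem_filter.mpr ⟨hb2B, hcon⟩)
  -- distinctness
  have hb1a : b₁ ≠ a := fun h => haB (h ▸ hb1B)
  have hb2a : b₂ ≠ a := fun h => haB (h ▸ hb2B)
  refine ⟨a, b₁, b₂, haA', haS, hb1B', hb1S, hb2B', hb2S, ?_, ?_, ?_⟩
  · -- card = 5
    have h1 : b₂ ∉ ({v} : Finset (Fin n)) := by simp [hb2v]
    have h2 : a ∉ ({b₂, v} : Finset (Fin n)) := by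
      simp only [Finset.mem_insert, Finset.mem_singleton]
      push_neg
      exact ⟨Ne.symm hb2a, hav⟩
    have h3' : b₁ ∉ ({a, b₂, v} : Finset (Fin n)) := by
      simp only [Finset.mem_insert, Finset.mem_singleton]
      push_neg
      exact ⟨hb1a, Ne.symm hb2b1, hb1v⟩
    have h4 : u ∉ ({b₁, a, b₂, v} : Finset (Fin n)) := by
      simp only [Finset.mem_insert, Finset.mem_singleton]
      push_neg
      exact ⟨Ne.symm hb1u, Ne.symm hau, Ne.symm hb2u, huv⟩
    rw [Finset.card_insert_of_notMem h4, Finset.card_insert_of_notMem h3',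
      Finset.card_insert_of_notMem h2, Finset.card_insert_of_notMem h1,
      Finset.card_singleton]
  · -- {u, b₁, a} ∈ H
    have : ({u, b₁, a} : Finset (Fin n)) = {u, a, b₁} := by
      ext y; simp only [Finset.mem_insert, Finset.mem_singleton]; tauto
    rw [this]
    exact hb1edge
  · -- {a, b₂, v} ∈ H
    have : ({a, b₂, v} : Finset (Fin n)) = {v, a, b₂} := by
      ext y; simp only [Finset.mem_insert, Finset.mem_singleton]; tauto
    rw [this]
    exact hb2edge
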